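/- Let $U_q$ be the set of $q$-element subsets of $[n]$, let $a_Z \geq 0$ for $Z \in U_q$, and define $\mu_\ell = \max_{Y \in U_\ell} \sum_{Z \in U_q, Z \supseteq Y} a_Z$. Let $X_1, \dots, X_n$ be independent Bernoulli random variables each with parameter $p \in [0,1]$. Then for any integer $w \geq 0$, $\mathbb{E}\left[ \left( \sum_{Z \in U_q} a_Z \prod_{v \in Z} X_v \right)^w \right] \leq \left( \sum_{k=0}^q \binom{wq}{k} \mu_k p^{q-k} \right)^w$. -/

import Mathlib

open Finset MeasureTheory ProbabilityTheory

/-- The maximum, over `ℓ`-element subsets `Y` of `[n]`, of the sum of `a Z` over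
`q`-element subsets `Z ⊇ Y` (taken as `0` if there are no `ℓ`-element subsets). -/
noncomputable def polyMu (n q : ℕ) (a : Finset (Fin n) → ℝ) (ℓ : ℕ) : ℝ :=
  (((Finset.powersetCard ℓ (Finset.univ : Finset (Fin n))).image fun Y =>
    ∑ Z ∈ (Finset.powersetCard q (Finset.univ : Finset (Fin n))).filter
      (fun Z => Y ⊆ Z), a Z).max).unbotD 0

variable {n q : ℕ} {a : Finset (Fin n) → ℝ}

lemma polyMu_nonneg (ha : ∀ Z, 0 ≤ a Z) (k : ℕ) : 0 ≤ polyMu n q a k := by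
  unfold polyMu
  cases hmax : (((Finset.powersetCard k (Finset.univ : Finset (Fin n))).image fun Y =>
      ∑ Z ∈ (Finset.powersetCard q (Finset.univ : Finset (Fin n))).filter
        (fun Z => Y ⊆ Z), a Z).max) with
  | bot => simp
  | coe b =>
    have hb := Finset.mem_of_max hmax
    simp only [Finset.mem_image] at hb
    obtain ⟨Y, -, rfl⟩ := hb
    rw [WithBot.unbotD_coe]
    exact Finset.sum_nonneg fun Z _ => ha Z

lemma sum_le_polyMu (ha : ∀ Z, 0 ≤ a Z) {Y : Finset (Fin n)} {k : ℕ} (hY : Y.card = k) :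
    ∑ Z ∈ (Finset.powersetCard q (Finset.univ : Finset (Fin n))).filter
      (fun Z => Y ⊆ Z), a Z ≤ polyMu n q a k := by
  have hmem : (∑ Z ∈ (Finset.powersetCard q (Finset.univ : Finset (Fin n))).filter
      (fun Z => Y ⊆ Z), a Z) ∈ ((Finset.powersetCard k (Finset.univ : Finset (Fin n))).image
        fun Y => ∑ Z ∈ (Finset.powersetCard q (Finset.univ : Finset (Fin n))).filter
          (fun Z => Y ⊆ Z), a Z) :=
    Finset.mem_image_of_mem _ (Finset.mem_powersetCard.2 ⟨Finset.subset_univ Y, hY⟩)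
  obtain ⟨b, hb⟩ := Finset.max_of_mem hmem
  have hle := Finset.le_max hmem
  rw [hb] at hle
  unfold polyMu
  rw [hb]
  exact WithBot.coe_le_coe.1 hle

lemma key_sum (ha : ∀ Z, 0 ≤ a Z) {p : ℝ} (hp0 : 0 ≤ p) (N : ℕ)
    (W : Finset (Fin n)) (hW : W.card ≤ N) :
    ∑ Z ∈ Finset.powersetCard q (Finset.univ : Finset (Fin n)), a Z * p ^ (Z \ W).card ≤
    ∑ k ∈ Finset.range (q + 1), (N.choose k : ℝ) * polyMu n q a k * p ^ (q - k) := by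
  rw [← Finset.sum_fiberwise_of_maps_to (g := fun Z => (Z ∩ W).card)
    (t := Finset.range (q + 1)) ?hmap]
  case hmap =>
    intro Z hZ
    rw [Finset.mem_range]
    have h1 := Finset.card_le_card (Finset.inter_subset_left : Z ∩ W ⊆ Z)
    rw [(Finset.mem_powersetCard.1 hZ).2] at h1
    omega
  apply Finset.sum_le_sum
  intro k hk
  set F := (Finset.powersetCard q (Finset.univ : Finset (Fin n))).filter
    (fun Z => (Z ∩ W).card = k) with hF
  have hstep : ∀ Z ∈ F, (Z \ W).card = q - k := by
    intro Z hZ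
    rw [hF, Finset.mem_filter] at hZ
    have h1 := Finset.card_inter_add_card_sdiff Z W
    rw [hZ.2, (Finset.mem_powersetCard.1 hZ.1).2] at h1
    omega
  calc ∑ Z ∈ F, a Z * p ^ (Z \ W).card
      = (∑ Z ∈ F, a Z) * p ^ (q - k) := by
        rw [Finset.sum_mul]
        exact Finset.sum_congr rfl fun Z hZ => by rw [hstep Z hZ]
    _ ≤ ((N.choose k : ℝ) * polyMu n q a k) * p ^ (q - k) := by
        apply mul_le_mul_of_nonneg_right _ (pow_nonneg hp0 _)
        have hmap2 : ∀ Z ∈ F, Z ∩ W ∈ Finset.powersetCard k W := by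
          intro Z hZ
          rw [hF, Finset.mem_filter] at hZ
          exact Finset.mem_powersetCard.2 ⟨Finset.inter_subset_right, hZ.2⟩
        calc ∑ Z ∈ F, a Z
            = ∑ Y ∈ Finset.powersetCard k W, ∑ Z ∈ F.filter (fun Z => Z ∩ W = Y), a Z :=
              (Finset.sum_fiberwise_of_maps_to hmap2 _).symm
          _ ≤ ∑ Y ∈ Finset.powersetCard k W, polyMu n q a k := by
              apply Finset.sum_le_sum
              intro Y hY
              refine le_trans (Finset.sum_le_sum_of_subset_of_nonneg ?_ fun Z _ _ => ha Z)
                (sum_le_polyMu ha (Finset.mem_powersetCard.1 hY).2)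
              intro Z hZ
              simp only [hF, Finset.mem_filter] at hZ ⊢
              exact ⟨hZ.1.1, hZ.2 ▸ Finset.inter_subset_left⟩
          _ = (W.card.choose k : ℝ) * polyMu n q a k := by
              rw [Finset.sum_const, Finset.card_powersetCard, nsmul_eq_mul]
          _ ≤ (N.choose k : ℝ) * polyMu n q a k :=
              mul_le_mul_of_nonneg_right (Nat.cast_le.2 (Nat.choose_le_choose k hW))
                (polyMu_nonneg ha k)
    _ = (N.choose k : ℝ) * polyMu n q a k * p ^ (q - k) := rfl

lemma prod01 {m : ℕ} (b : Fin m → ℝ) (h : ∀ v, b v = 0 ∨ b v = 1) (W : Finset (Fin m)) :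
    ∏ v ∈ W, b v = if ∀ v ∈ W, b v = 1 then 1 else 0 := by
  by_cases hW : ∀ v ∈ W, b v = 1
  · rw [if_pos hW]; exact Finset.prod_eq_one hW
  · rw [if_neg hW]
    push_neg at hW
    obtain ⟨v, hv, hv1⟩ := hW
    exact Finset.prod_eq_zero hv ((h v).resolve_right hv1)

lemma prod01_mem {m : ℕ} (b : Fin m → ℝ) (h : ∀ v, b v = 0 ∨ b v = 1) (W : Finset (Fin m)) :
    (∏ v ∈ W, b v) = 0 ∨ (∏ v ∈ W, b v) = 1 := by
  rw [prod01 b h W]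
  split_ifs
  · right; rfl
  · left; rfl

lemma prod01_mul {m : ℕ} (b : Fin m → ℝ) (h : ∀ v, b v = 0 ∨ b v = 1) (W Z : Finset (Fin m)) :
    (∏ v ∈ W, b v) * ∏ v ∈ Z, b v = ∏ v ∈ W ∪ Z, b v := by
  rw [prod01 b h W, prod01 b h Z, prod01 b h (W ∪ Z)]
  simp only [Finset.forall_mem_union]
  split_ifs with h1 h2 h3 <;> norm_num <;> tauto

/-- Proposition 4.2, part 1 (Fapp-prop2, part 1). -/
theorem stmt1 {Ω : Type*} [MeasurableSpace Ω] (μ : Measure Ω) [IsProbabilityMeasure μ]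
    (n q : ℕ) (a : Finset (Fin n) → ℝ) (ha : ∀ Z, 0 ≤ a Z)
    (p : ℝ) (hp : p ∈ Set.Icc (0 : ℝ) 1)
    (X : Fin n → Ω → ℝ) (hXmeas : ∀ i, Measurable (X i))
    (hindep : iIndepFun X μ)
    (hdist : ∀ i, Measure.map (X i) μ =
      ENNReal.ofReal p • Measure.dirac (1 : ℝ) +
      ENNReal.ofReal (1 - p) • Measure.dirac (0 : ℝ))
    (w : ℕ) :
    ∫ ω, (∑ Z ∈ Finset.powersetCard q (Finset.univ : Finset (Fin n)),
        a Z * ∏ v ∈ Z, X v ω) ^ w ∂μ ≤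
    (∑ k ∈ Finset.range (q + 1),
      ((w * q).choose k : ℝ) * polyMu n q a k * p ^ (q - k)) ^ w := by
  obtain ⟨hp0, hp1⟩ := hp
  -- abbreviations
  have hBnn : 0 ≤ ∑ k ∈ Finset.range (q + 1),
      ((w * q).choose k : ℝ) * polyMu n q a k * p ^ (q - k) :=
    Finset.sum_nonneg fun k _ => mul_nonneg
      (mul_nonneg (Nat.cast_nonneg _) (polyMu_nonneg ha k)) (pow_nonneg hp0 _)
  -- a.e. the X's take values in {0,1}
  have h01 : ∀ᵐ ω ∂μ, ∀ v, X v ω = 0 ∨ X v ω = 1 := by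
    rw [MeasureTheory.ae_all_iff]
    intro v
    have hset : MeasurableSet ({0, 1} : Set ℝ) :=
      (measurableSet_singleton 0).union (measurableSet_singleton 1)
    have hpre : μ (X v ⁻¹' {0, 1}) = 1 := by
      rw [← Measure.map_apply (hXmeas v) hset, hdist v]
      rw [Measure.add_apply, Measure.smul_apply, Measure.smul_apply,
        Measure.dirac_apply_of_mem (by simp : (1 : ℝ) ∈ ({0, 1} : Set ℝ)),
        Measure.dirac_apply_of_mem (by simp : (0 : ℝ) ∈ ({0, 1} : Set ℝ))]
      simp only [smul_eq_mul, mul_one]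
      rw [← ENNReal.ofReal_add hp0 (by linarith)]
      norm_num
    have hcompl : μ (X v ⁻¹' {0, 1})ᶜ = 0 :=
      (prob_compl_eq_zero_iff (hXmeas v hset)).2 hpre
    rw [MeasureTheory.ae_iff]
    have hsets : {ω | ¬ (X v ω = 0 ∨ X v ω = 1)} = (X v ⁻¹' {0, 1})ᶜ := by
      ext ω
      simp [Set.mem_preimage]
    rw [hsets]
    exact hcompl
  -- expectation of each X v
  have hEX : ∀ v, ∫ ω, X v ω ∂μ = p := by
    intro v
    have hid : ∫ x, x ∂(Measure.map (X v) μ) = ∫ ω, X v ω ∂μ :=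
      integral_map (hXmeas v).aemeasurable aestronglyMeasurable_id
    have hdint : ∀ (c : ENNReal) (x : ℝ), c ≠ ⊤ →
        Integrable (fun y : ℝ => y) (c • Measure.dirac x) := by
      intro c x hc
      refine ⟨aestronglyMeasurable_id, ?_⟩
      rw [hasFiniteIntegral_iff_norm, lintegral_smul_measure,
        lintegral_dirac x (fun y : ℝ => ENNReal.ofReal ‖y‖)]
      exact ENNReal.mul_lt_top hc.lt_top ENNReal.ofReal_lt_top
    rw [← hid, hdist v, integral_add_measure (hdint _ _ ENNReal.ofReal_ne_top)
      (hdint _ _ ENNReal.ofReal_ne_top), integral_smul_measure, integral_smul_measure,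
      integral_dirac, integral_dirac]
    simp [ENNReal.toReal_ofReal hp0]
  -- measurability
  have hprodmeas : ∀ W : Finset (Fin n), Measurable (fun ω => ∏ v ∈ W, X v ω) :=
    fun W => Finset.measurable_prod _ fun v _ => hXmeas v
  have hSmeas : Measurable (fun ω => ∑ Z ∈ Finset.powersetCard q (Finset.univ : Finset (Fin n)),
      a Z * ∏ v ∈ Z, X v ω) :=
    Finset.measurable_sum _ fun Z _ => (hprodmeas Z).const_mul (a Z)
  -- integrability
  have hInt : ∀ (W : Finset (Fin n)) (m : ℕ), Integrable (fun ω =>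
      (∏ v ∈ W, X v ω) * (∑ Z ∈ Finset.powersetCard q (Finset.univ : Finset (Fin n)),
        a Z * ∏ v ∈ Z, X v ω) ^ m) μ := by
    intro W m
    refine Integrable.mono' (integrable_const
      ((∑ Z ∈ Finset.powersetCard q (Finset.univ : Finset (Fin n)), a Z) ^ m))
      (((hprodmeas W).mul (hSmeas.pow_const m)).aestronglyMeasurable) ?_
    filter_upwards [h01] with ω hω
    have hprodle : ∀ V : Finset (Fin n), 0 ≤ ∏ v ∈ V, X v ω ∧ (∏ v ∈ V, X v ω) ≤ 1 := by
      intro V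
      rcases prod01_mem (fun v => X v ω) hω V with h | h <;> rw [h] <;> norm_num
    have hSnn : 0 ≤ ∑ Z ∈ Finset.powersetCard q (Finset.univ : Finset (Fin n)),
        a Z * ∏ v ∈ Z, X v ω :=
      Finset.sum_nonneg fun Z _ => mul_nonneg (ha Z) (hprodle Z).1
    have hSle : (∑ Z ∈ Finset.powersetCard q (Finset.univ : Finset (Fin n)),
        a Z * ∏ v ∈ Z, X v ω) ≤ ∑ Z ∈ Finset.powersetCard q (Finset.univ : Finset (Fin n)), a Z :=
      Finset.sum_le_sum fun Z _ => by
        nlinarith [(hprodle Z).1, (hprodle Z).2, ha Z]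
    rw [Real.norm_eq_abs, abs_mul, abs_pow]
    calc |∏ v ∈ W, X v ω| * |∑ Z ∈ Finset.powersetCard q (Finset.univ : Finset (Fin n)),
        a Z * ∏ v ∈ Z, X v ω| ^ m
        ≤ 1 * (∑ Z ∈ Finset.powersetCard q (Finset.univ : Finset (Fin n)), a Z) ^ m := by
          apply mul_le_mul (abs_le.2 ⟨by linarith [(hprodle W).1], (hprodle W).2⟩)
            (pow_le_pow_left₀ (abs_nonneg _) (by rw [abs_of_nonneg hSnn]; exact hSle) m)
            (pow_nonneg (abs_nonneg _) m) zero_le_one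
      _ = _ := one_mul _
  -- integral of a product of the X's
  have hprodint : ∀ W : Finset (Fin n), ∫ ω, ∏ v ∈ W, X v ω ∂μ = p ^ W.card := by
    intro W
    induction W using Finset.induction_on with
    | empty => simp
    | insert _ _ hi =>
      rename_i i W ih
      have hind : IndepFun (X i) (∏ j ∈ W, X j) μ :=
        (hindep.indepFun_finsetProd_of_notMem hXmeas hi).symm
      have happ : (fun ω => ∏ v ∈ W, X v ω) = ∏ j ∈ W, X j := by
        ext ω; rw [Finset.prod_apply]
      calc ∫ ω, ∏ v ∈ insert i W, X v ω ∂μ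
          = ∫ ω, X i ω * ∏ v ∈ W, X v ω ∂μ := by
            congr 1; ext ω; rw [Finset.prod_insert hi]
        _ = (∫ ω, X i ω ∂μ) * ∫ ω, ∏ v ∈ W, X v ω ∂μ := by
            have := hind.integral_mul_eq_mul_integral (hXmeas i).aestronglyMeasurable
              (by rw [← happ]; exact (hprodmeas W).aestronglyMeasurable)
            rw [← happ] at this
            exact this
        _ = p ^ (insert i W).card := by
            rw [hEX i, ih, Finset.card_insert_of_notMem hi, pow_succ]
            ring
  -- main induction
  have main : ∀ (m : ℕ) (W : Finset (Fin n)), W.card + m * q ≤ w * q →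
      ∫ ω, (∏ v ∈ W, X v ω) * (∑ Z ∈ Finset.powersetCard q (Finset.univ : Finset (Fin n)),
        a Z * ∏ v ∈ Z, X v ω) ^ m ∂μ ≤
      p ^ W.card * (∑ k ∈ Finset.range (q + 1),
        ((w * q).choose k : ℝ) * polyMu n q a k * p ^ (q - k)) ^ m := by
    intro m
    induction m with
    | zero =>
      intro W _
      simp only [pow_zero, mul_one]
      exact le_of_eq (hprodint W)
    | succ m ih =>
      intro W hW
      have hWq : W.card ≤ w * q := by
        have : (m + 1) * q = m * q + q := by ring
        omega
      have hae : (fun ω => (∏ v ∈ W, X v ω) *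
          (∑ Z ∈ Finset.powersetCard q (Finset.univ : Finset (Fin n)),
            a Z * ∏ v ∈ Z, X v ω) ^ (m + 1)) =ᵐ[μ]
          (fun ω => ∑ Z ∈ Finset.powersetCard q (Finset.univ : Finset (Fin n)),
            a Z * ((∏ v ∈ W ∪ Z, X v ω) *
              (∑ Z' ∈ Finset.powersetCard q (Finset.univ : Finset (Fin n)),
                a Z' * ∏ v ∈ Z', X v ω) ^ m)) := by
        filter_upwards [h01] with ω hω
        rw [pow_succ']
        rw [show (∏ v ∈ W, X v ω) *
            ((∑ Z ∈ Finset.powersetCard q (Finset.univ : Finset (Fin n)),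
              a Z * ∏ v ∈ Z, X v ω) *
             (∑ Z ∈ Finset.powersetCard q (Finset.univ : Finset (Fin n)),
              a Z * ∏ v ∈ Z, X v ω) ^ m) =
            (∑ Z ∈ Finset.powersetCard q (Finset.univ : Finset (Fin n)),
              a Z * ((∏ v ∈ W, X v ω) * ∏ v ∈ Z, X v ω)) *
            (∑ Z ∈ Finset.powersetCard q (Finset.univ : Finset (Fin n)),
              a Z * ∏ v ∈ Z, X v ω) ^ m by
          rw [← mul_assoc]
          congr 1
          rw [Finset.mul_sum]
          exact Finset.sum_congr rfl fun Z _ => by ring]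
        rw [Finset.sum_mul]
        apply Finset.sum_congr rfl
        intro Z _
        rw [prod01_mul _ hω]
        ring
      rw [integral_congr_ae hae, integral_finset_sum _
        (fun Z _ => ((hInt (W ∪ Z) m).const_mul (a Z)))]
      calc ∑ Z ∈ Finset.powersetCard q (Finset.univ : Finset (Fin n)),
          ∫ ω, a Z * ((∏ v ∈ W ∪ Z, X v ω) *
            (∑ Z' ∈ Finset.powersetCard q (Finset.univ : Finset (Fin n)),
              a Z' * ∏ v ∈ Z', X v ω) ^ m) ∂μ
          = ∑ Z ∈ Finset.powersetCard q (Finset.univ : Finset (Fin n)),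
            a Z * ∫ ω, (∏ v ∈ W ∪ Z, X v ω) *
              (∑ Z' ∈ Finset.powersetCard q (Finset.univ : Finset (Fin n)),
                a Z' * ∏ v ∈ Z', X v ω) ^ m ∂μ :=
            Finset.sum_congr rfl fun Z _ => integral_const_mul _ _
        _ ≤ ∑ Z ∈ Finset.powersetCard q (Finset.univ : Finset (Fin n)),
            a Z * (p ^ (W ∪ Z).card * (∑ k ∈ Finset.range (q + 1),
              ((w * q).choose k : ℝ) * polyMu n q a k * p ^ (q - k)) ^ m) := by
            apply Finset.sum_le_sum
            intro Z hZ
            apply mul_le_mul_of_nonneg_left _ (ha Z)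
            apply ih
            have h1 : (W ∪ Z).card ≤ W.card + Z.card := Finset.card_union_le W Z
            have h2 : Z.card = q := (Finset.mem_powersetCard.1 hZ).2
            have h3 : (m + 1) * q = m * q + q := by ring
            omega
        _ = (∑ Z ∈ Finset.powersetCard q (Finset.univ : Finset (Fin n)),
              a Z * p ^ (Z \ W).card) *
            (p ^ W.card * (∑ k ∈ Finset.range (q + 1),
              ((w * q).choose k : ℝ) * polyMu n q a k * p ^ (q - k)) ^ m) := by
            rw [Finset.sum_mul]
            apply Finset.sum_congr rfl
            intro Z _
            have hc : (W ∪ Z).card = W.card + (Z \ W).card := by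
              rw [← Finset.union_sdiff_self_eq_union,
                Finset.card_union_of_disjoint Finset.disjoint_sdiff]
            rw [hc, pow_add]
            ring
        _ ≤ (∑ k ∈ Finset.range (q + 1),
              ((w * q).choose k : ℝ) * polyMu n q a k * p ^ (q - k)) *
            (p ^ W.card * (∑ k ∈ Finset.range (q + 1),
              ((w * q).choose k : ℝ) * polyMu n q a k * p ^ (q - k)) ^ m) := by
            apply mul_le_mul_of_nonneg_right (key_sum ha hp0 (w * q) W hWq)
            exact mul_nonneg (pow_nonneg hp0 _) (pow_nonneg hBnn _)
        _ = p ^ W.card * (∑ k ∈ Finset.range (q + 1),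
              ((w * q).choose k : ℝ) * polyMu n q a k * p ^ (q - k)) ^ (m + 1) := by
            rw [pow_succ]
            ring
  have := main w ∅ (by simp)
  simpa using this
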